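/- Let z_1,...,z_N be i.i.d. from q on a finite set Z with q > 0, and resample k indices without replacement proportionally to w_i = p(z_i)/q(z_i). Then for any fixed k and any z ∈ Z, the expected fraction of resampled points equal to z converges to p(z) as N → ∞. -/

import Mathlib

open scoped Classical
open MeasureTheory ProbabilityTheory Filter

section AuxLemmas
open Finset


section Det
variable {α : Type*} [Fintype α] [DecidableEq α]

def consEmb (a : α) {k : ℕ} (τ : Fin k ↪ {x : α // x ≠ a}) : Fin (k+1) ↪ α where
  toFun := Fin.cons a (fun t => (τ t).1)
  inj' := by
    intro s t h
    induction s using Fin.cases with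
    | zero =>
      induction t using Fin.cases with
      | zero => rfl
      | succ t => simp only [Fin.cons_zero, Fin.cons_succ] at h; exact absurd h.symm (τ t).2
    | succ s =>
      induction t using Fin.cases with
      | zero => simp only [Fin.cons_zero, Fin.cons_succ] at h; exact absurd h (τ s).2
      | succ t =>
        simp only [Fin.cons_succ] at h
        exact congrArg Fin.succ (τ.injective (Subtype.ext h))

def embSuccEquiv (α : Type*) [DecidableEq α] (k : ℕ) :
    (Fin (k+1) ↪ α) ≃ Σ a : α, (Fin k ↪ {x : α // x ≠ a}) where
  toFun σ := ⟨σ 0, ⟨fun t => ⟨σ t.succ, fun h => (Fin.succ_ne_zero t) (σ.injective h)⟩,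
    fun s t h => Fin.succ_injective _ (σ.injective (congrArg Subtype.val h))⟩⟩
  invFun x := consEmb x.1 x.2
  left_inv σ := by
    ext t
    induction t using Fin.cases with
    | zero => simp [consEmb]; rfl
    | succ t => simp [consEmb]; rfl
  right_inv x := by
    rcases x with ⟨a, τ⟩
    simp only [consEmb, Function.Embedding.coeFn_mk, Fin.cons_succ, Fin.cons_zero]
    rfl

/-- the sequential-sampling weight of an ordered sample -/
noncomputable def seqP (w : α → ℝ) {k : ℕ} (σ : Fin k ↪ α) : ℝ :=
  ∏ t : Fin k, w (σ t) / ((∑ i : α, w i) - ∑ s ∈ univ.filter (fun s => s < t), w (σ s))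

lemma partial_sum_cons (w : α → ℝ) {k : ℕ} (a : α) (τ : Fin k ↪ {x : α // x ≠ a}) (t : Fin k) :
    ∑ s ∈ univ.filter (fun s => s < t.succ), w (consEmb a τ s)
      = w a + ∑ s ∈ univ.filter (fun s => s < t), w ((τ s).1) := by
  rw [sum_filter, Fin.sum_univ_succ]
  simp [consEmb, Fin.succ_lt_succ_iff, Fin.succ_pos, sum_filter]
  rfl

lemma seqP_cons (w : α → ℝ) {k : ℕ} (a : α) (τ : Fin k ↪ {x : α // x ≠ a}) :
    seqP w (consEmb a τ) = (w a / ∑ i : α, w i) * seqP (fun x => w x.1) τ := by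
  rw [seqP, Fin.prod_univ_succ]
  congr 1
  · simp [consEmb, Finset.filter_eq_empty_iff]
    rfl
  · rw [seqP]
    refine Finset.prod_congr rfl fun t _ => ?_
    rw [partial_sum_cons]
    have h1 : ∑ i : {x : α // x ≠ a}, w i.1 = (∑ i : α, w i) - w a := by
      rw [eq_sub_iff_add_eq, ← Finset.sum_compl_add_sum {a} w, Finset.sum_singleton]
      congr 1
      exact (Finset.sum_subtype _ (fun x => by simp) w).symm
    rw [h1]
    rw [show consEmb a τ t.succ = (τ t).1 from rfl]
    simp [consEmb]
    ring_nf

end Det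

section Det2
variable {α : Type*} [Fintype α] [DecidableEq α]

lemma rem_eq (w : α → ℝ) {k : ℕ} (σ : Fin k ↪ α) (S : Finset (Fin k)) :
    (∑ i : α, w i) - ∑ s ∈ S, w (σ s) = ∑ i ∈ univ \ S.map σ, w i := by
  rw [Finset.sum_sdiff_eq_sub (Finset.subset_univ _), Finset.sum_map]

lemma seqP_nonneg (w : α → ℝ) (hw : ∀ i, 0 ≤ w i) {k : ℕ} (σ : Fin k ↪ α) :
    0 ≤ seqP w σ := by
  refine Finset.prod_nonneg fun t _ => div_nonneg (hw _) ?_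
  rw [rem_eq]
  exact Finset.sum_nonneg fun i _ => hw i

lemma sum_seqP_le_one : ∀ (k : ℕ) (α : Type*) [Fintype α] [DecidableEq α] (w : α → ℝ),
    (∀ i, 0 ≤ w i) → ∑ σ : Fin k ↪ α, seqP w σ ≤ 1 := by
  intro k
  induction k with
  | zero =>
    intro α _ _ w hw
    have : ∀ σ : Fin 0 ↪ α, seqP w σ = 1 := fun σ => by simp [seqP]
    simp only [this, Finset.sum_const, nsmul_eq_mul, mul_one]
    rw [← Fintype.card, Fintype.card_embedding_eq]
    simp
  | succ k ih =>
    intro α _ _ w hw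
    rw [← Equiv.sum_comp (embSuccEquiv α k).symm (fun σ => seqP w σ), ← Finset.univ_sigma_univ, Finset.sum_sigma]
    simp only [embSuccEquiv, Equiv.coe_fn_symm_mk]
    by_cases hW : ∑ i : α, w i = 0
    · have hz : ∀ i, w i = 0 := by
        intro i
        have := (Finset.sum_eq_zero_iff_of_nonneg (fun i _ => hw i)).1 hW
        exact this i (Finset.mem_univ i)
      have : ∀ (a : α) (τ : Fin k ↪ {x : α // x ≠ a}), seqP w (consEmb a τ) = 0 := by
        intro a τ
        rw [seqP_cons, hz, zero_div, zero_mul]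
      simp only [this, Finset.sum_const_zero]
      norm_num
    · have hWpos : 0 < ∑ i : α, w i :=
        lt_of_le_of_ne (Finset.sum_nonneg fun i _ => hw i) (Ne.symm hW)
      calc ∑ a : α, ∑ τ : Fin k ↪ {x : α // x ≠ a}, seqP w (consEmb a τ)
          ≤ ∑ a : α, w a / (∑ i : α, w i) := by
            refine Finset.sum_le_sum fun a _ => ?_
            have h1 : ∑ τ : Fin k ↪ {x : α // x ≠ a}, seqP (fun x : {x : α // x ≠ a} => w x.1) τ ≤ 1 :=
              ih {x : α // x ≠ a} (fun x => w x.1) (fun x => hw x.1)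
            calc ∑ τ : Fin k ↪ {x : α // x ≠ a}, seqP w (consEmb a τ)
                = (w a / ∑ i : α, w i) * ∑ τ : Fin k ↪ {x : α // x ≠ a},
                    seqP (fun x : {x : α // x ≠ a} => w x.1) τ := by
                  rw [Finset.mul_sum]
                  exact Finset.sum_congr rfl fun τ _ => seqP_cons w a τ
              _ ≤ (w a / ∑ i : α, w i) * 1 :=
                  mul_le_mul_of_nonneg_left h1 (div_nonneg (hw a) hWpos.le)
              _ = w a / (∑ i : α, w i) := mul_one _
        _ = 1 := by rw [← Finset.sum_div, div_self hW]

end Det2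

section Det3
variable {α : Type*} [Fintype α] [DecidableEq α]

lemma prod_one_ite {k : ℕ} (t : Fin k) (A C : ℝ) :
    ∏ r : Fin k, (if r = t then A else C) = A * C^(k-1) := by
  rw [← Finset.mul_prod_erase univ _ (mem_univ t), if_pos rfl]
  congr 1
  rw [Finset.prod_congr rfl (fun r hr => if_neg (Finset.ne_of_mem_erase hr)), Finset.prod_const,
    Finset.card_erase_of_mem (mem_univ t), Finset.card_univ, Fintype.card_fin]

lemma prod_two_ite {k : ℕ} {t s : Fin k} (hts : t ≠ s) (A B C : ℝ) :
    ∏ r : Fin k, (if r = t then A else if r = s then B else C) = A * B * C^(k-2) := by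
  have hs : s ∈ univ.erase t := Finset.mem_erase.2 ⟨hts.symm, mem_univ s⟩
  have htail : ∏ r ∈ (univ.erase t).erase s, (if r = t then A else if r = s then B else C)
      = C^(k-2) := by
    rw [Finset.prod_congr rfl (fun r hr => ?_)]
    · rw [Finset.prod_const, Finset.card_erase_of_mem hs,
        Finset.card_erase_of_mem (mem_univ t), Finset.card_univ, Fintype.card_fin,
        Nat.sub_sub]
    · rw [if_neg (Finset.ne_of_mem_erase (Finset.mem_of_mem_erase hr)),
        if_neg (Finset.ne_of_mem_erase hr)]
  rw [← Finset.mul_prod_erase univ _ (mem_univ t), if_pos rfl,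
    ← Finset.mul_prod_erase (univ.erase t) _ hs, if_neg hts.symm, if_pos rfl, htail, ← mul_assoc]

/-- sum over all functions with one marked coordinate -/
lemma sum_all_fun (u v : α → ℝ) {k : ℕ} (t : Fin k) :
    ∑ f : Fin k → α, (∏ r, u (f r)) * v (f t)
      = ((∑ j, u j * v j)) * (∑ j, u j)^(k-1) := by
  have h1 : ∀ f : Fin k → α, (∏ r, u (f r)) * v (f t)
      = ∏ r, (u (f r) * if r = t then v (f r) else 1) := by
    intro f
    rw [Finset.prod_mul_distrib]
    congr 1
    rw [Finset.prod_ite_eq' univ t (fun r => v (f r))]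
    simp
  simp only [h1]
  rw [← Fintype.prod_sum (fun r j => u j * if r = t then v j else 1)]
  have h2 : ∀ r : Fin k, (∑ j, u j * if r = t then v j else 1)
      = if r = t then (∑ j, u j * v j) else (∑ j, u j) := by
    intro r
    by_cases h : r = t <;> simp [h]
  simp only [h2]
  exact prod_one_ite t _ _

lemma sum_all_fun2 (u v1 v2 : α → ℝ) {k : ℕ} {t s : Fin k} (hts : t ≠ s) :
    ∑ f : Fin k → α, (∏ r, u (f r)) * v1 (f t) * v2 (f s)
      = (∑ j, u j * v1 j) * (∑ j, u j * v2 j) * (∑ j, u j)^(k-2) := by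
  have h1 : ∀ f : Fin k → α, (∏ r, u (f r)) * v1 (f t) * v2 (f s)
      = ∏ r, (u (f r) * ((if r = t then v1 (f r) else 1) * (if r = s then v2 (f r) else 1))) := by
    intro f
    simp only [Finset.prod_mul_distrib]
    rw [Finset.prod_ite_eq' univ t (fun r => v1 (f r)), Finset.prod_ite_eq' univ s
      (fun r => v2 (f r))]
    simp [mul_assoc]
  simp only [h1]
  rw [← Fintype.prod_sum (fun r j => u j * ((if r = t then v1 j else 1) * (if r = s then v2 j else 1)))]
  have h2 : ∀ r : Fin k, (∑ j, u j * ((if r = t then v1 j else 1) * (if r = s then v2 j else 1)))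
      = if r = t then (∑ j, u j * v1 j) else if r = s then (∑ j, u j * v2 j) else (∑ j, u j) := by
    intro r
    by_cases h : r = t
    · subst h; simp [if_neg hts]
    · by_cases h2 : r = s <;> simp [h, h2, if_neg (Ne.symm hts)]
  simp only [h2]
  exact prod_two_ite hts _ _ _

end Det3

section Det4
variable {α : Type*} [Fintype α] [DecidableEq α]
variable {w : α → ℝ} {C : ℝ} {k : ℕ} {b : α → Prop}

lemma indsum_eq (u : α → ℝ) (b : α → Prop) :
    ∑ j, u j * (if b j then (1:ℝ) else 0) = ∑ j ∈ univ.filter b, u j := by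
  rw [Finset.sum_filter]
  exact Finset.sum_congr rfl fun j _ => by by_cases h : b j <;> simp [h]

lemma sum_all_marked (u : α → ℝ) (b : α → Prop) {k : ℕ} (hk : 0 < k) :
    ∑ f : Fin k → α, (∏ t, u (f t)) * (((univ.filter (fun t => b (f t))).card : ℝ)/k)
      = (∑ j ∈ univ.filter b, u j) * (∑ j, u j)^(k-1) := by
  have hcard : ∀ f : Fin k → α, ((univ.filter (fun t => b (f t))).card : ℝ)
      = ∑ t, (if b (f t) then (1:ℝ) else 0) := by
    intro f
    rw [Finset.card_filter, Nat.cast_sum]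
    exact Finset.sum_congr rfl fun t _ => by by_cases h : b (f t) <;> simp [h]
  have hk' : (k : ℝ) ≠ 0 := Nat.cast_ne_zero.2 hk.ne'
  calc ∑ f : Fin k → α, (∏ t, u (f t)) * (((univ.filter (fun t => b (f t))).card : ℝ)/k)
      = (∑ f : Fin k → α, ∑ t, (∏ r, u (f r)) * (if b (f t) then (1:ℝ) else 0))/k := by
        rw [Finset.sum_div]
        exact Finset.sum_congr rfl fun f _ => by rw [hcard, ← mul_div_assoc, Finset.mul_sum]
    _ = (∑ t : Fin k, ∑ f : Fin k → α, (∏ r, u (f r)) * (if b (f t) then (1:ℝ) else 0))/k := by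
        rw [Finset.sum_comm]
    _ = (∑ _t : Fin k, (∑ j ∈ univ.filter b, u j) * (∑ j, u j)^(k-1))/k := by
        congr 1
        refine Finset.sum_congr rfl fun t _ => ?_
        rw [sum_all_fun u (fun j => if b j then (1:ℝ) else 0) t, indsum_eq]
    _ = (∑ j ∈ univ.filter b, u j) * (∑ j, u j)^(k-1) := by
        rw [Finset.sum_const, Finset.card_univ, Fintype.card_fin, nsmul_eq_mul]
        exact mul_div_cancel_left₀ _ hk' 

lemma partial_sum_le (hwC : ∀ i, w i ≤ C) (hC : 0 ≤ C) (σ : Fin k ↪ α) (t : Fin k) :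
    ∑ s ∈ univ.filter (fun s => s < t), w (σ s) ≤ (k:ℝ) * C := by
  have h1 : (univ.filter (fun s : Fin k => s < t)).card ≤ k :=
    le_trans (Finset.card_filter_le _ _) (by simp)
  calc ∑ s ∈ univ.filter (fun s => s < t), w (σ s)
      ≤ (univ.filter (fun s : Fin k => s < t)).card • C :=
        Finset.sum_le_card_nsmul _ _ C (fun s _ => hwC _)
    _ = ((univ.filter (fun s : Fin k => s < t)).card : ℝ) * C := nsmul_eq_mul _ _
    _ ≤ (k:ℝ) * C := mul_le_mul_of_nonneg_right (by exact_mod_cast h1) hC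

lemma gfrac_nonneg {k : ℕ} (σ : Fin k → α) :
    0 ≤ (((univ.filter (fun t => b (σ t))).card : ℝ)/k) := by positivity

lemma gfrac_le_one {k : ℕ} (hk : 0 < k) (σ : Fin k → α) :
    (((univ.filter (fun t => b (σ t))).card : ℝ)/k) ≤ 1 := by
  rw [div_le_one (by exact_mod_cast hk)]
  exact_mod_cast le_trans (Finset.card_filter_le _ _) (by simp)

lemma seqP_le_prod (hw0 : ∀ i, 0 ≤ w i) (hwC : ∀ i, w i ≤ C) (hC : 0 ≤ C)
    (hW : (k:ℝ) * C < ∑ i, w i) (σ : Fin k ↪ α) :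
    seqP w σ ≤ ∏ t, w (σ t) / ((∑ i, w i) - k*C) := by
  refine Finset.prod_le_prod (fun t _ => ?_) (fun t _ => ?_)
  · refine div_nonneg (hw0 _) ?_
    rw [rem_eq]
    exact Finset.sum_nonneg fun i _ => hw0 i
  · exact div_le_div_of_nonneg_left (hw0 _) (by linarith)
      (by have := partial_sum_le hwC hC σ t; linarith)

lemma prod_le_seqP (hw0 : ∀ i, 0 ≤ w i) (hwC : ∀ i, w i ≤ C) (hC : 0 ≤ C)
    (hW : (k:ℝ) * C < ∑ i, w i) (σ : Fin k ↪ α) :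
    ∏ t, w (σ t) / (∑ i, w i) ≤ seqP w σ := by
  refine Finset.prod_le_prod (fun t _ => ?_) (fun t _ => ?_)
  · exact div_nonneg (hw0 _) (by nlinarith [mul_nonneg (Nat.cast_nonneg (α := ℝ) k) hC])
  · have h1 := partial_sum_le hwC hC σ t
    have h2 : 0 ≤ ∑ s ∈ univ.filter (fun s => s < t), w (σ s) :=
      Finset.sum_nonneg fun s _ => hw0 _
    exact div_le_div_of_nonneg_left (hw0 _) (by linarith) (by linarith)

/-- sum over embeddings of a nonneg function equals sum over injective functions -/
lemma sum_emb_eq (F : (Fin k → α) → ℝ) :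
    ∑ σ : Fin k ↪ α, F ⇑σ = ∑ f ∈ univ.filter (fun f : Fin k → α => Function.Injective f), F f := by
  rw [← Equiv.sum_comp (Equiv.subtypeInjectiveEquivEmbedding (Fin k) α)
    (fun σ : Fin k ↪ α => F ⇑σ)]
  exact (Finset.sum_subtype _ (fun f => by simp) F).symm

end Det4

section Det5
variable {α : Type*} [Fintype α] [DecidableEq α]
variable {w : α → ℝ} {C : ℝ} {k : ℕ} {b : α → Prop}

lemma upper_bound (hw0 : ∀ i, 0 ≤ w i) (hwC : ∀ i, w i ≤ C) (hC : 0 ≤ C) (hk : 0 < k)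
    (hW : (k:ℝ) * C < ∑ i, w i) :
    ∑ σ : Fin k ↪ α, seqP w σ * (((univ.filter (fun t => b (σ t))).card : ℝ)/k)
      ≤ ((∑ i ∈ univ.filter b, w i) / ((∑ i, w i) - k*C))
          * ((∑ i, w i)/((∑ i, w i) - k*C))^(k-1) := by
  set W := ∑ i, w i with hWdef
  set D := W - (k:ℝ)*C with hDdef
  have hD : 0 < D := by rw [hDdef]; linarith
  have step1 : ∑ σ : Fin k ↪ α, seqP w σ * (((univ.filter (fun t => b (σ t))).card : ℝ)/k)
      ≤ ∑ σ : Fin k ↪ α, (∏ t, w (σ t) / D) * (((univ.filter (fun t => b (σ t))).card : ℝ)/k) :=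
    Finset.sum_le_sum fun σ _ => mul_le_mul_of_nonneg_right
      (seqP_le_prod hw0 hwC hC hW σ) (gfrac_nonneg _)
  have step2 : ∑ σ : Fin k ↪ α, (∏ t, w (σ t) / D) * (((univ.filter (fun t => b (σ t))).card : ℝ)/k)
      ≤ ∑ f : Fin k → α, (∏ t, w (f t) / D) * (((univ.filter (fun t => b (f t))).card : ℝ)/k) := by
    rw [sum_emb_eq (fun f => (∏ t, w (f t) / D) * (((univ.filter (fun t => b (f t))).card : ℝ)/k))]
    refine Finset.sum_le_sum_of_subset_of_nonneg (Finset.filter_subset _ _) fun f _ _ => ?_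
    exact mul_nonneg (Finset.prod_nonneg fun t _ => div_nonneg (hw0 _) hD.le) (gfrac_nonneg _)
  have step3 : ∑ f : Fin k → α, (∏ t, w (f t) / D) * (((univ.filter (fun t => b (f t))).card : ℝ)/k)
      = ((∑ i ∈ univ.filter b, w i) / D) * (W/D)^(k-1) := by
    rw [sum_all_marked (fun j => w j / D) b hk, ← Finset.sum_div, ← Finset.sum_div]
  calc _ ≤ _ := step1
    _ ≤ _ := step2
    _ = _ := step3

lemma lower_bound (hw0 : ∀ i, 0 ≤ w i) (hwC : ∀ i, w i ≤ C) (hC : 0 ≤ C) (hk : 0 < k)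
    (hW : (k:ℝ) * C < ∑ i, w i) :
    (∑ i ∈ univ.filter b, w i) / (∑ i, w i) - (k:ℝ)*k*C/(∑ i, w i)
      ≤ ∑ σ : Fin k ↪ α, seqP w σ * (((univ.filter (fun t => b (σ t))).card : ℝ)/k) := by
  set W := ∑ i, w i with hWdef
  have hkC : 0 ≤ (k:ℝ)*C := mul_nonneg (Nat.cast_nonneg _) hC
  have hWpos : 0 < W := lt_of_le_of_lt hkC hW
  have huW : ∑ j, w j / W = 1 := by rw [← Finset.sum_div, div_self hWpos.ne']
  have hQnonneg : ∀ f : Fin k → α, 0 ≤ ∏ t, w (f t) / W :=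
    fun f => Finset.prod_nonneg fun t _ => div_nonneg (hw0 _) hWpos.le
  have step1 : ∑ σ : Fin k ↪ α, (∏ t, w (σ t) / W) * (((univ.filter (fun t => b (σ t))).card : ℝ)/k)
      ≤ ∑ σ : Fin k ↪ α, seqP w σ * (((univ.filter (fun t => b (σ t))).card : ℝ)/k) :=
    Finset.sum_le_sum fun σ _ => mul_le_mul_of_nonneg_right
      (prod_le_seqP hw0 hwC hC hW σ) (gfrac_nonneg _)
  -- split all functions into injective and non-injective
  have hsplit : ∑ f : Fin k → α, (∏ t, w (f t) / W) * (((univ.filter (fun t => b (f t))).card : ℝ)/k)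
      = ∑ σ : Fin k ↪ α, (∏ t, w (σ t) / W) * (((univ.filter (fun t => b (σ t))).card : ℝ)/k)
        + ∑ f ∈ univ.filter (fun f : Fin k → α => ¬ Function.Injective f),
            (∏ t, w (f t) / W) * (((univ.filter (fun t => b (f t))).card : ℝ)/k) := by
    rw [sum_emb_eq (fun f => (∏ t, w (f t) / W) * (((univ.filter (fun t => b (f t))).card : ℝ)/k))]
    exact (Finset.sum_filter_add_sum_filter_not univ _ _).symm
  have hall : ∑ f : Fin k → α, (∏ t, w (f t) / W) * (((univ.filter (fun t => b (f t))).card : ℝ)/k)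
      = (∑ i ∈ univ.filter b, w i) / W := by
    rw [sum_all_marked (fun j => w j / W) b hk, ← Finset.sum_div, huW, one_pow, mul_one]
  -- bound the non-injective part
  have hpair : ∀ t s : Fin k, t ≠ s →
      ∑ f : Fin k → α, (∏ r, w (f r) / W) * (if f t = f s then (1:ℝ) else 0)
        = ∑ i, (w i / W)^2 := by
    intro t s hts
    have hrw : ∀ f : Fin k → α, (∏ r, w (f r) / W) * (if f t = f s then (1:ℝ) else 0)
        = ∑ i, (∏ r, w (f r) / W) * (if f t = i then (1:ℝ) else 0) * (if f s = i then 1 else 0) := by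
      intro f
      have : ∑ i : α, (if f t = i then (1:ℝ) else 0) * (if f s = i then 1 else 0)
          = if f t = f s then 1 else 0 := by
        rw [Finset.sum_eq_single (f t)]
        · simp [eq_comm]
        · intro i _ hi; rw [if_neg (Ne.symm (Ne.symm ((Ne.symm hi)))), zero_mul]
        · intro h; exact absurd (Finset.mem_univ _) h
      rw [← this, Finset.mul_sum]
      exact Finset.sum_congr rfl fun i _ => by ring
    simp only [hrw]
    rw [Finset.sum_comm]
    have : ∀ i : α, ∑ f : Fin k → α, (∏ r, w (f r) / W) * (if f t = i then (1:ℝ) else 0)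
          * (if f s = i then 1 else 0) = (w i / W)^2 := by
      intro i
      rw [sum_all_fun2 (fun j => w j / W) (fun j => if j = i then (1:ℝ) else 0)
        (fun j => if j = i then (1:ℝ) else 0) hts]
      have h1 : ∑ j, (w j / W) * (if j = i then (1:ℝ) else 0) = w i / W := by
        rw [Finset.sum_eq_single i] <;> simp +contextual
      rw [h1, huW, one_pow, mul_one, sq]
    simp only [this]
  have hnoninj : ∑ f ∈ univ.filter (fun f : Fin k → α => ¬ Function.Injective f),
      (∏ t, w (f t) / W) * (((univ.filter (fun t => b (f t))).card : ℝ)/k)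
        ≤ (k:ℝ)*k*C/W := by
    calc ∑ f ∈ univ.filter (fun f : Fin k → α => ¬ Function.Injective f),
        (∏ t, w (f t) / W) * (((univ.filter (fun t => b (f t))).card : ℝ)/k)
        ≤ ∑ f ∈ univ.filter (fun f : Fin k → α => ¬ Function.Injective f),
            ∑ p ∈ (univ : Finset (Fin k × Fin k)).filter (fun p => p.1 ≠ p.2),
              (∏ t, w (f t) / W) * (if f p.1 = f p.2 then (1:ℝ) else 0) := by
          refine Finset.sum_le_sum fun f hf => ?_
          obtain ⟨t, s, hfts, hts⟩ := Function.not_injective_iff.1 (Finset.mem_filter.1 hf).2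
          calc (∏ t, w (f t) / W) * (((univ.filter (fun t => b (f t))).card : ℝ)/k)
              ≤ ∏ t, w (f t) / W := by
                nth_rewrite 2 [← mul_one (∏ t, w (f t) / W)]
                exact mul_le_mul_of_nonneg_left (gfrac_le_one hk f) (hQnonneg f)
            _ = (∏ t, w (f t) / W) * (if f t = f s then (1:ℝ) else 0) := by
                rw [if_pos hfts, mul_one]
            _ ≤ _ := Finset.single_le_sum (f := fun p : Fin k × Fin k =>
                  (∏ t, w (f t) / W) * (if f p.1 = f p.2 then (1:ℝ) else 0))
                  (fun p _ => mul_nonneg (hQnonneg f) (by positivity))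
                  (Finset.mem_filter.2 ⟨Finset.mem_univ (t, s), hts⟩)
      _ ≤ ∑ f : Fin k → α,
            ∑ p ∈ (univ : Finset (Fin k × Fin k)).filter (fun p => p.1 ≠ p.2),
              (∏ t, w (f t) / W) * (if f p.1 = f p.2 then (1:ℝ) else 0) := by
          refine Finset.sum_le_sum_of_subset_of_nonneg (Finset.filter_subset _ _) fun f _ _ => ?_
          exact Finset.sum_nonneg fun p _ => mul_nonneg (hQnonneg f) (by positivity)
      _ = ∑ p ∈ (univ : Finset (Fin k × Fin k)).filter (fun p => p.1 ≠ p.2),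
            ∑ f : Fin k → α, (∏ t, w (f t) / W) * (if f p.1 = f p.2 then (1:ℝ) else 0) :=
          Finset.sum_comm
      _ = ∑ _p ∈ (univ : Finset (Fin k × Fin k)).filter (fun p => p.1 ≠ p.2),
            ∑ i, (w i / W)^2 := Finset.sum_congr rfl fun p hp => hpair _ _ (Finset.mem_filter.1 hp).2
      _ ≤ ∑ _p ∈ (univ : Finset (Fin k × Fin k)).filter (fun p => p.1 ≠ p.2), C/W := by
          refine Finset.sum_le_sum fun p _ => ?_
          calc ∑ i, (w i / W)^2 ≤ ∑ i, (C/W) * (w i / W) := by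
                refine Finset.sum_le_sum fun i _ => ?_
                rw [sq]
                exact mul_le_mul_of_nonneg_right
                  (div_le_div_of_nonneg_right (hwC i) hWpos.le) (div_nonneg (hw0 i) hWpos.le)
            _ = C/W := by rw [← Finset.mul_sum, huW, mul_one]
      _ ≤ (k:ℝ)*k*C/W := by
          rw [Finset.sum_const, nsmul_eq_mul]
          have hcard : ((univ : Finset (Fin k × Fin k)).filter (fun p => p.1 ≠ p.2)).card ≤ k*k := by
            calc _ ≤ (univ : Finset (Fin k × Fin k)).card := Finset.card_filter_le _ _
              _ = k*k := by simp [Fintype.card_fin]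
          rw [mul_div_assoc]
          refine mul_le_mul_of_nonneg_right ?_ (div_nonneg hC hWpos.le)
          calc ((_ : ℕ) : ℝ) ≤ ((k*k : ℕ) : ℝ) := by exact_mod_cast hcard
            _ = (k:ℝ)*k := by push_cast; ring
  linarith [step1, hsplit ▸ hall, hnoninj]

end Det5

section Limit
open Filter Topology

lemma aux_tendsto {v : ℕ → ℝ} {C ρ : ℝ} (hv0 : ∀ i, 0 ≤ v i) (hvC : ∀ i, v i ≤ C)
    (hC : 0 < C) {bb : ℕ → Prop} {k : ℕ} (hk : 0 < k)
    (h1 : Tendsto (fun N : ℕ => (∑ i ∈ Finset.range N, v i)/N) atTop (nhds 1))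
    (h2 : Tendsto (fun N : ℕ => (∑ i ∈ Finset.range N, if bb i then v i else 0)/N) atTop (nhds ρ)) :
    Tendsto (fun N : ℕ => ∑ σ : Fin k ↪ Fin N, seqP (fun i : Fin N => v i) σ *
      (((univ.filter (fun t => bb (σ t))).card : ℝ)/k)) atTop (nhds ρ) := by
  have key : ∀ (a b c : ℝ), c ≠ 0 → (a/c)/(b/c) = a/b := fun a b c hc =>
    div_div_div_cancel_right₀ hc a b
  set W : ℕ → ℝ := fun N => ∑ i : Fin N, v i with hWdef
  set Wz : ℕ → ℝ := fun N => ∑ i ∈ (univ : Finset (Fin N)).filter (fun i => bb i.val), v i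
    with hWzdef
  have hWr : ∀ N, W N = ∑ i ∈ Finset.range N, v i := fun N => Fin.sum_univ_eq_sum_range _ _
  have hWzr : ∀ N, Wz N = ∑ i ∈ Finset.range N, if bb i then v i else 0 := by
    intro N
    show ∑ i ∈ (univ : Finset (Fin N)).filter (fun i => bb i.val), v i.val
        = ∑ i ∈ Finset.range N, if bb i then v i else 0
    rw [Finset.sum_filter]
    exact Fin.sum_univ_eq_sum_range (fun i => if bb i then v i else 0) N
  have h1' : Tendsto (fun N => W N / N) atTop (nhds 1) :=
    h1.congr (fun N => by rw [hWr])
  have h2' : Tendsto (fun N => Wz N / N) atTop (nhds ρ) :=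
    h2.congr (fun N => by rw [hWzr])
  have hNlarge : ∀ᶠ N : ℕ in atTop, (k:ℝ)*C < W N ∧ 1 ≤ N := by
    have e1 : ∀ᶠ N : ℕ in atTop, (1:ℝ)/2 < W N / N :=
      h1'.eventually (eventually_gt_nhds (by norm_num))
    have e2 : ∀ᶠ N : ℕ in atTop, 2*((k:ℝ)*C) < (N : ℝ) :=
      (tendsto_natCast_atTop_atTop (R := ℝ)).eventually_gt_atTop _
    filter_upwards [e1, e2, eventually_ge_atTop 1] with N hN1 hN2 hN3
    refine ⟨?_, hN3⟩
    have hNpos : (0:ℝ) < N := by exact_mod_cast hN3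
    rw [lt_div_iff₀ hNpos] at hN1
    nlinarith
  -- lower bound sequence
  have hL : Tendsto (fun N => Wz N / W N - (k:ℝ)*k*C/(W N)) atTop (nhds ρ) := by
    have t1 : Tendsto (fun N => (Wz N / N)/(W N / N)) atTop (nhds ρ) := by
      simpa [Pi.div_def] using h2'.div h1' one_ne_zero
    have t1' : Tendsto (fun N => Wz N / W N) atTop (nhds ρ) := by
      refine t1.congr' ?_
      filter_upwards [eventually_ge_atTop 1] with N hN
      exact key _ _ _ (by positivity)
    have t2 : Tendsto (fun N : ℕ => ((k:ℝ)*k*C/(N:ℝ))/(W N / N)) atTop (nhds 0) := by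
      simpa [Pi.div_def] using (tendsto_const_div_atTop_nhds_zero_nat ((k:ℝ)*k*C)).div h1' one_ne_zero
    have t2' : Tendsto (fun N => (k:ℝ)*k*C/(W N)) atTop (nhds 0) := by
      refine t2.congr' ?_
      filter_upwards [eventually_ge_atTop 1] with N hN
      exact key _ _ _ (by positivity)
    simpa using t1'.sub t2'
  -- upper bound sequence
  have hU : Tendsto (fun N => (Wz N / (W N - (k:ℝ)*C)) * ((W N/(W N - (k:ℝ)*C))^(k-1)))
      atTop (nhds ρ) := by
    have td : Tendsto (fun N => W N / N - ((k:ℝ)*C)/(N:ℝ)) atTop (nhds 1) := by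
      simpa using h1'.sub (tendsto_const_div_atTop_nhds_zero_nat ((k:ℝ)*C))
    have t1 : Tendsto (fun N => Wz N / (W N - (k:ℝ)*C)) atTop (nhds ρ) := by
      have := h2'.div td one_ne_zero
      rw [div_one] at this
      refine this.congr' ?_
      filter_upwards [eventually_ge_atTop 1] with N hN
      simp only [Pi.div_apply]
      rw [← sub_div]
      exact key _ _ _ (by positivity)
    have t2 : Tendsto (fun N => (W N/(W N - (k:ℝ)*C))^(k-1)) atTop (nhds 1) := by
      have hq : Tendsto (fun N => W N/(W N - (k:ℝ)*C)) atTop (nhds 1) := by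
        have := h1'.div td one_ne_zero
        rw [div_one] at this
        refine this.congr' ?_
        filter_upwards [eventually_ge_atTop 1] with N hN
        simp only [Pi.div_apply]
        rw [← sub_div]
        exact key _ _ _ (by positivity)
      simpa using hq.pow (k-1)
    simpa using t1.mul t2
  refine tendsto_of_tendsto_of_tendsto_of_le_of_le' hL hU ?_ ?_
  · filter_upwards [hNlarge] with N hN
    exact lower_bound (fun i => hv0 _) (fun i => hvC _) hC.le hk hN.1
  · filter_upwards [hNlarge] with N hN
    have hup := upper_bound (w := fun i : Fin N => v i.val) (b := fun i : Fin N => bb i.val)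
      (C := C) (k := k) (fun i => hv0 _) (fun i => hvC _) hC.le hk hN.1
    calc ∑ σ : Fin k ↪ Fin N, seqP (fun i : Fin N => v i.val) σ *
          (((univ.filter (fun t => bb ((σ t)).val)).card : ℝ)/k)
        ≤ _ := hup
      _ = Wz N / (W N - (k:ℝ)*C) * (W N / (W N - (k:ℝ)*C))^(k-1) := rfl

end Limit

section Prob
open MeasureTheory ProbabilityTheory Filter

lemma det_bound {N k : ℕ} (hk : 0 < k) (v : Fin N → ℝ) (hv0 : ∀ i, 0 ≤ v i) (bb : Fin N → Prop) :
    |∑ σ : Fin k ↪ Fin N, seqP v σ * (((univ.filter (fun t => bb (σ t))).card : ℝ)/k)| ≤ 1 := by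
  rw [abs_le]
  constructor
  · calc (-1:ℝ) ≤ 0 := by norm_num
      _ ≤ ∑ σ : Fin k ↪ Fin N, seqP v σ * (((univ.filter (fun t => bb (σ t))).card : ℝ)/k) :=
        Finset.sum_nonneg fun σ _ => mul_nonneg (seqP_nonneg v hv0 σ) (gfrac_nonneg _)
  · calc ∑ σ : Fin k ↪ Fin N, seqP v σ * (((univ.filter (fun t => bb (σ t))).card : ℝ)/k)
        ≤ ∑ σ : Fin k ↪ Fin N, seqP v σ := by
          refine Finset.sum_le_sum fun σ _ => ?_
          nth_rewrite 2 [← mul_one (seqP v σ)]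
          exact mul_le_mul_of_nonneg_left (gfrac_le_one hk _) (seqP_nonneg v hv0 σ)
      _ ≤ 1 := sum_seqP_le_one k (Fin N) v hv0

lemma meas_ext_singleton {Z : Type*} [Fintype Z] [MeasurableSpace Z] [MeasurableSingletonClass Z]
    {μ ν : MeasureTheory.Measure Z} (h : ∀ z, μ {z} = ν {z}) : μ = ν := by
  ext s hs
  have hsc : s.Countable := s.toFinite.countable
  have hd : s.PairwiseDisjoint (fun x => ({x} : Set Z)) := fun x _ y _ hxy => by
    simp [Function.onFun, hxy]
  rw [← Set.biUnion_of_singleton s, measure_biUnion hsc hd (fun z _ => measurableSet_singleton z),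
    measure_biUnion hsc hd (fun z _ => measurableSet_singleton z)]
  exact tsum_congr fun z => h z

end Prob

end AuxLemmas

/-- k-sample importance resampling: resampling `k` indices without replacement with weights
`w_i = p(z_i)/q(z_i)` from `N` i.i.d. `q`-samples, the expected fraction of resampled points
equal to any `z` converges to `p z` as `N → ∞`. The expectation sums over ordered
sequential-sampling-without-replacement draws (injections `Fin k ↪ Fin N`). -/
theorem stmt_17 {Z : Type*} [Fintype Z] [MeasurableSpace Z] [MeasurableSingletonClass Z]
    (p q : Z → ℝ) (hq : ∀ z, 0 < q z) (hqsum : ∑ z, q z = 1)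
    (hp : ∀ z, 0 ≤ p z) (hpsum : ∑ z, p z = 1)
    {Ω : Type*} [MeasurableSpace Ω] (μ : Measure Ω) [IsProbabilityMeasure μ]
    (X : ℕ → Ω → Z) (hXmeas : ∀ n, Measurable (X n))
    (hindep : iIndepFun X μ)
    (hlaw : ∀ n z, μ {ω | X n ω = z} = ENNReal.ofReal (q z))
    (k : ℕ) (hk : 0 < k) :
    ∀ z : Z, Tendsto
      (fun N => ∫ ω,
        ∑ σ : Fin k ↪ Fin N,
          (∏ t : Fin k,
            (p (X (σ t) ω) / q (X (σ t) ω)) /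
              ((∑ i : Fin N, p (X i ω) / q (X i ω)) -
                ∑ s ∈ Finset.univ.filter (fun s => s < t), p (X (σ s) ω) / q (X (σ s) ω))) *
          (((Finset.univ.filter (fun t : Fin k => X (σ t) ω = z)).card : ℝ) / k) ∂μ)
      atTop (nhds (p z)) := by
  intro z
  have hZne : Nonempty Z := by
    by_contra h
    rw [not_nonempty_iff] at h
    rw [Finset.univ_eq_empty, Finset.sum_empty] at hpsum
    norm_num at hpsum
  have hf0 : ∀ x, 0 ≤ p x / q x := fun x => div_nonneg (hp x) (hq x).le
  obtain ⟨C, hfC, hCpos⟩ : ∃ C : ℝ, (∀ x, p x / q x ≤ C) ∧ 0 < C := by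
    refine ⟨Finset.univ.sup' Finset.univ_nonempty (fun x => p x / q x),
      fun x => Finset.le_sup' (fun x => p x / q x) (Finset.mem_univ x), ?_⟩
    obtain ⟨x, _, hx⟩ := Finset.exists_ne_zero_of_sum_ne_zero (hpsum ▸ one_ne_zero)
    exact lt_of_lt_of_le (div_pos (lt_of_le_of_ne (hp x) (Ne.symm hx)) (hq x))
      (Finset.le_sup' (fun x => p x / q x) (Finset.mem_univ x))
  have hmeasg : ∀ g : Z → ℝ, Measurable g := fun g => measurable_of_countable g
  -- identical distribution
  have hmap : ∀ n, Measure.map (X n) μ = Measure.map (X 0) μ := by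
    intro n
    refine meas_ext_singleton fun z' => ?_
    rw [Measure.map_apply (hXmeas n) (measurableSet_singleton _),
      Measure.map_apply (hXmeas 0) (measurableSet_singleton _)]
    have h1 : ∀ m : ℕ, X m ⁻¹' {z'} = {ω | X m ω = z'} := fun m => by
      ext ω; simp [Set.mem_preimage]
    rw [h1, h1, hlaw n, hlaw 0]
  have hident : ∀ i, IdentDistrib (X i) (X 0) μ μ :=
    fun i => ⟨(hXmeas i).aemeasurable, (hXmeas 0).aemeasurable, hmap i⟩
  -- strong law for any composed function
  have hSLLN : ∀ g : Z → ℝ, ∀ᵐ ω ∂μ, Tendsto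
      (fun n : ℕ => (∑ i ∈ Finset.range n, g (X i ω))/n) atTop (nhds (∑ x, q x * g x)) := by
    intro g
    have hint : Integrable (fun ω => g (X 0 ω)) μ := by
      refine (integrable_const (Finset.univ.sup' Finset.univ_nonempty (fun x => |g x|))).mono'
        (((hmeasg g).comp (hXmeas 0)).aestronglyMeasurable) ?_
      filter_upwards with ω
      rw [Real.norm_eq_abs]
      exact Finset.le_sup' (fun x => |g x|) (Finset.mem_univ (X 0 ω))
    have hindep' : Pairwise (Function.onFun (IndepFun · · μ) fun n ω => g (X n ω)) := by
      intro i j hij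
      exact (hindep.indepFun hij).comp (hmeasg g) (hmeasg g)
    have hident' : ∀ i, IdentDistrib (fun ω => g (X i ω)) (fun ω => g (X 0 ω)) μ μ :=
      fun i => (hident i).comp (hmeasg g)
    have hE : (μ[fun ω => g (X 0 ω)]) = ∑ x, q x * g x := by
      have h0 : (μ[fun ω => g (X 0 ω)]) = ∫ x, g x ∂(Measure.map (X 0) μ) :=
        (integral_map (hXmeas 0).aemeasurable (hmeasg g).aestronglyMeasurable).symm
      rw [h0, integral_fintype .of_finite]
      refine Finset.sum_congr rfl fun x _ => ?_
      rw [measureReal_def, Measure.map_apply (hXmeas 0) (measurableSet_singleton _)]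
      have h1 : X 0 ⁻¹' {x} = {ω | X 0 ω = x} := by ext ω; simp [Set.mem_preimage]
      rw [h1, hlaw 0, ENNReal.toReal_ofReal (hq x).le, smul_eq_mul]
    have := strong_law_ae_real (fun n ω => g (X n ω)) hint hindep' hident'
    rw [hE] at this
    exact this
  have hq1 : ∑ x, q x * (p x / q x) = 1 := by
    rw [← hpsum]
    exact Finset.sum_congr rfl fun x _ => by rw [mul_comm, div_mul_cancel₀ _ (hq x).ne']
  have hq2 : ∑ x, q x * (if x = z then p x / q x else 0) = p z := by
    have : ∀ x, q x * (if x = z then p x / q x else 0)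
        = if x = z then q x * (p x / q x) else 0 := fun x => by
      by_cases h : x = z <;> simp [h]
    simp only [this]
    rw [Finset.sum_ite_eq' Finset.univ z (fun x => q x * (p x / q x)), if_pos (Finset.mem_univ z),
      mul_comm, div_mul_cancel₀ _ (hq z).ne']
  -- the integrand
  set F : ℕ → Ω → ℝ := fun N ω =>
    ∑ σ : Fin k ↪ Fin N,
      (∏ t : Fin k,
        (p (X (σ t) ω) / q (X (σ t) ω)) /
          ((∑ i : Fin N, p (X i ω) / q (X i ω)) -
            ∑ s ∈ Finset.univ.filter (fun s => s < t), p (X (σ s) ω) / q (X (σ s) ω))) *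
      (((Finset.univ.filter (fun t : Fin k => X (σ t) ω = z)).card : ℝ) / k) with hFdef
  have hFseq : ∀ (N : ℕ) (ω : Ω), F N ω = ∑ σ : Fin k ↪ Fin N,
      seqP (fun i : Fin N => p (X i ω) / q (X i ω)) σ *
      (((Finset.univ.filter (fun t : Fin k => X (σ t) ω = z)).card : ℝ) / k) := fun N ω => rfl
  have hcard : ∀ (N : ℕ) (σ : Fin k ↪ Fin N) (ω : Ω),
      ((Finset.univ.filter (fun t : Fin k => X (σ t) ω = z)).card : ℝ)
        = ∑ t : Fin k, if X (σ t) ω = z then (1:ℝ) else 0 := by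
    intro N σ ω
    rw [Finset.card_filter, Nat.cast_sum]
    exact Finset.sum_congr rfl fun t _ => by by_cases h : X (σ t) ω = z <;> simp [h]
  have hFmeas : ∀ N : ℕ, Measurable (F N) := by
    intro N
    refine Finset.measurable_sum _ fun σ _ => Measurable.mul ?_ ?_
    · refine Finset.measurable_prod _ fun t _ => Measurable.div ?_ ?_
      · exact ((hmeasg p).comp (hXmeas _)).div ((hmeasg q).comp (hXmeas _))
      · refine Measurable.sub ?_ ?_
        · exact Finset.measurable_sum _ fun i _ =>
            ((hmeasg p).comp (hXmeas _)).div ((hmeasg q).comp (hXmeas _))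
        · exact Finset.measurable_sum _ fun s _ =>
            ((hmeasg p).comp (hXmeas _)).div ((hmeasg q).comp (hXmeas _))
    · refine Measurable.div ?_ measurable_const
      have : (fun ω => ((Finset.univ.filter (fun t : Fin k => X (σ t) ω = z)).card : ℝ))
          = fun ω => ∑ t : Fin k, if X (σ t) ω = z then (1:ℝ) else 0 := by
        funext ω; exact hcard N σ ω
      rw [this]
      refine Finset.measurable_sum _ fun t _ => Measurable.ite ?_ measurable_const measurable_const
      exact (hXmeas (σ t)) (measurableSet_singleton z)
  have hFbound : ∀ (N : ℕ) (ω : Ω), ‖F N ω‖ ≤ 1 := by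
    intro N ω
    rw [Real.norm_eq_abs, hFseq]
    exact det_bound hk (fun i : Fin N => p (X i ω) / q (X i ω)) (fun i => hf0 _)
      (fun i => X i ω = z)
  have hFlim : ∀ᵐ ω ∂μ, Tendsto (fun N => F N ω) atTop (nhds (p z)) := by
    filter_upwards [hSLLN (fun x => p x / q x), hSLLN (fun x => if x = z then p x / q x else 0)]
      with ω h1 h2
    rw [hq1] at h1
    rw [hq2] at h2
    have := aux_tendsto (v := fun i => p (X i ω) / q (X i ω)) (C := C) (ρ := p z)
      (bb := fun i => X i ω = z) (fun i => hf0 _) (fun i => hfC _) hCpos hk h1 h2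
    exact Tendsto.congr (fun N => (hFseq N ω).symm) this
  have hmain := tendsto_integral_of_dominated_convergence (F := F) (f := fun _ => p z)
    (μ := μ) (bound := fun _ => (1:ℝ)) (fun n => (hFmeas n).aestronglyMeasurable)
    (integrable_const 1) (fun n => Filter.Eventually.of_forall (fun ω => hFbound n ω)) hFlim
  rw [integral_const] at hmain
  simp only [probReal_univ, smul_eq_mul, one_mul] at hmain
  exact hmain
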